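/- Under hypothesis (H), there exist K > 1 and x₀ such that for all x ≥ x₀: Φ'(x)·e^{Φ(x)} ≤ e^{K·Φ(x)}, and consequently ∫_x^∞ e^{-Φ(t)} dt ≥ e^{-K·Φ(x)}. -/

import Mathlib

open Real MeasureTheory

theorem stmt12 (Φ : ℝ → ℝ) (ε M : ℝ)
    (hΦ : ContDiff ℝ 2 Φ) (hsym : ∀ x, Φ (-x) = Φ x)
    (hconv : ConvexOn ℝ Set.univ Φ)
    (hε : 0 < ε) (hε' : ε ≤ 1/2) (hM : 0 < M) (hΦM : 0 < Φ M)
    (hH : ∀ x ≥ M, (1 + ε) * Φ x ≤ x * deriv Φ x ∧ x * deriv Φ x ≤ (2 - ε) * Φ x) :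
    ∃ K > (1:ℝ), ∃ x₀ : ℝ, ∀ x ≥ x₀,
      deriv Φ x * Real.exp (Φ x) ≤ Real.exp (K * Φ x) ∧
      Real.exp (-(K * Φ x)) ≤ ∫ t in Set.Ici x, Real.exp (-Φ t) := by
  have hdiff : ∀ y : ℝ, DifferentiableAt ℝ Φ y := fun y =>
    (hΦ.differentiable (by norm_num)).differentiableAt
  have hcont : Continuous Φ := (hΦ.differentiable (by norm_num)).continuous
  -- derivative at M is positive
  have haM : 0 < deriv Φ M := by
    have h := (hH M le_rfl).1
    by_contra hc
    push_neg at hc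
    nlinarith [mul_nonpos_of_nonneg_of_nonpos hM.le hc]
  -- tangent line lower bound : Φ y ≥ Φ M + deriv Φ M * (y - M) for y ≥ M
  have htangent : ∀ y ≥ M, Φ M + deriv Φ M * (y - M) ≤ Φ y := by
    intro y hy
    rcases eq_or_lt_of_le hy with rfl | hy'
    · simp
    · have := hconv.deriv_le_slope (Set.mem_univ M) (Set.mem_univ y) hy' (hdiff M)
      rw [slope_def_field] at this
      have hyM : 0 < y - M := by linarith
      rw [le_div_iff₀ hyM] at this
      linarith
  -- monotone on [M, ∞)
  have hmono : MonotoneOn Φ (Set.Ici M) := by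
    have hd : MonotoneOn (deriv Φ) Set.univ :=
      hconv.monotoneOn_deriv (fun x _ => hdiff x)
    apply monotoneOn_of_deriv_nonneg (convex_Ici M) (hcont.continuousOn)
      (fun x _ => (hdiff x).differentiableWithinAt)
    intro x hx
    rw [interior_Ici] at hx
    have := hd (Set.mem_univ M) (Set.mem_univ x) (le_of_lt hx)
    linarith
  have hpos : ∀ y ≥ M, 0 < Φ y := fun y hy =>
    lt_of_lt_of_le hΦM (hmono (Set.mem_Ici.2 le_rfl) (Set.mem_Ici.2 hy) hy)
  refine ⟨2, one_lt_two, M + 3, fun x hx => ?_⟩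
  have hxM : M ≤ x := by linarith
  have hx3 : (3:ℝ) ≤ x := by linarith
  have hΦx : 0 < Φ x := hpos x hxM
  constructor
  · -- first inequality
    have h1 : deriv Φ x ≤ Φ x := by
      have h := (hH x hxM).2
      have hx0 : 0 < x := by linarith
      nlinarith
    have h2 : Φ x ≤ Real.exp (Φ x) := (Real.add_one_le_exp (Φ x)).trans' (by linarith)
    calc deriv Φ x * Real.exp (Φ x) ≤ Real.exp (Φ x) * Real.exp (Φ x) := by
          apply mul_le_mul_of_nonneg_right (h1.trans h2) (Real.exp_pos _).le
      _ = Real.exp (2 * Φ x) := by rw [← Real.exp_add]; ring_nf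
  · -- second inequality
    -- integrability
    have hint : IntegrableOn (fun t => Real.exp (-Φ t)) (Set.Ici x) := by
      have hint0 : IntegrableOn
          (fun t => Real.exp (deriv Φ M * M - Φ M) * Real.exp (-(deriv Φ M) * t))
          (Set.Ici x) := by
        rw [integrableOn_Ici_iff_integrableOn_Ioi]
        exact (exp_neg_integrableOn_Ioi x haM).const_mul _
      apply hint0.integrable.mono' ((hcont.neg.rexp).aestronglyMeasurable)
      filter_upwards [ae_restrict_mem measurableSet_Ici] with t ht
      rw [Set.mem_Ici] at ht
      have htM : M ≤ t := le_trans hxM ht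
      have := htangent t htM
      rw [Real.norm_eq_abs, abs_of_pos (Real.exp_pos _),
        ← Real.exp_add]
      apply Real.exp_le_exp.2
      rw [Pi.neg_apply]
      nlinarith
    -- Φ (x+1) ≤ 2 Φ x
    have hΦx1 : Φ (x + 1) ≤ 2 * Φ x := by
      have hs := hconv.slope_le_deriv (Set.mem_univ x) (Set.mem_univ (x+1))
        (by linarith) (hdiff (x+1))
      rw [slope_def_field] at hs
      have h2 := (hH (x+1) (by linarith)).2
      have hpx1 : 0 < Φ (x+1) := hpos (x+1) (by linarith)
      have hd1 : deriv Φ (x+1) ≤ (2 - ε) * Φ (x+1) / (x+1) := by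
        rw [le_div_iff₀ (by linarith : (0:ℝ) < x + 1)]; nlinarith
      have hs' : Φ (x+1) - Φ x ≤ deriv Φ (x+1) := by
        have : (Φ (x+1) - Φ x) / (x + 1 - x) = Φ (x+1) - Φ x := by
          norm_num
        linarith [this ▸ hs]
      have h3 : Φ (x+1) - Φ x ≤ (2 - ε) * Φ (x+1) / (x+1) := le_trans hs' hd1
      rw [le_div_iff₀ (by linarith : (0:ℝ) < x + 1)] at h3
      nlinarith [mul_pos hpx1 (show (0:ℝ) < x - 1 by linarith), mul_nonneg hpx1.le hε.le]
    -- lower bound of integral by constant on Ioc x (x+1)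
    have hlow : Real.exp (-Φ (x+1)) ≤ ∫ t in Set.Ioc x (x+1), Real.exp (-Φ t) := by
      have hconst : ∫ t in Set.Ioc x (x+1), Real.exp (-Φ (x+1))
          = Real.exp (-Φ (x+1)) := by
        rw [setIntegral_const]
        simp [Real.volume_Ioc]
      rw [← hconst]
      apply setIntegral_mono_on
      · exact (integrableOn_const (by simp [Real.volume_Ioc]))
      · exact hint.mono_set (fun t ht => ht.1.le)
      · exact measurableSet_Ioc
      · intro t ht
        apply Real.exp_le_exp.2
        simp only [neg_le_neg_iff]
        exact hmono (Set.mem_Ici.2 (le_trans hxM ht.1.le)) (Set.mem_Ici.2 (by linarith))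
          ht.2
    have hsub : ∫ t in Set.Ioc x (x+1), Real.exp (-Φ t)
        ≤ ∫ t in Set.Ici x, Real.exp (-Φ t) := by
      apply setIntegral_mono_set hint
      · filter_upwards with t using (Real.exp_pos _).le
      · filter_upwards with t ht using ht.1.le
    have hexp : Real.exp (-(2 * Φ x)) ≤ Real.exp (-Φ (x+1)) := by
      apply Real.exp_le_exp.2; linarith
    linarith
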